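/- (Type soundness) A well-typed, closed term of λ_SHACL does not get stuck during evaluation, except possibly at the forms head nil or tail nil: if S, Γ ⊢ t : T, S' with t closed and t →* t' (the reflexive-transitive closure of the step relation), then t' is either a value, or a term containing the forms head nil or tail nil, or there exists t'' with t' → t''. -/

import Mathlib

/-! # λ_SHACL: a simply typed, call-by-value λ-calculus over an RDF/SHACL setting -/

/-- Node constants `v` (RDF nodes). -/
abbrev NodeId := String

/-- Shape-environment states `S` threaded through the typing judgment
    (a shape environment associating shape names with inferred information). -/
abbrev ShapeState := List (String × String)

/-- Types of λ_SHACL: the node (shape) type `s`, function types, list types,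
    record types and booleans. -/
inductive Ty : Type where
  | shape : Ty
  | arrow : Ty → Ty → Ty
  | list : Ty → Ty
  | record : List (String × Ty) → Ty
  | bool : Ty
deriving Repr

/-- Terms of λ_SHACL. -/
inductive Tm : Type where
  | var : String → Tm
  | node : NodeId → Tm                      -- node-value constant `v`
  | abs : String → Ty → Tm → Tm             -- λ(x:T).t
  | app : Tm → Tm → Tm
  | nil : Tm
  | cons : Tm → Tm → Tm
  | head : Tm → Tm
  | tail : Tm → Tm
  | record : List (String × Tm) → Tm        -- {lᵢ = tᵢ}
  | proj : Tm → String → Tm                 -- t.l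
  | tt : Tm                                 -- true
  | ff : Tm                                 -- false
  | ite : Tm → Tm → Tm → Tm
  | letIn : String → Tm → Tm → Tm
deriving Repr

/-- Values of λ_SHACL. -/
inductive Value : Tm → Prop where
  | node (v : NodeId) : Value (.node v)
  | abs (x : String) (T : Ty) (t : Tm) : Value (.abs x T t)
  | nil : Value .nil
  | cons {v₁ v₂ : Tm} : Value v₁ → Value v₂ → Value (.cons v₁ v₂)
  | record {fs : List (String × Tm)} : (∀ p ∈ fs, Value p.2) → Value (.record fs)
  | tt : Value .tt
  | ff : Value .ff

/-- Typing contexts `Γ`. -/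
abbrev Ctx := List (String × Ty)

/-- The typing judgment `S, Γ ⊢ t : T, S'`, threading the shape-environment
    state through the subterms, with the standard rule for each construct. -/
inductive Typing : ShapeState → Ctx → Tm → Ty → ShapeState → Prop where
  | var {S Γ x T} :
      List.lookup x Γ = some T → Typing S Γ (.var x) T S
  | node {S Γ} (v : NodeId) : Typing S Γ (.node v) .shape S
  | abs {S S' Γ x T₁ t T₂} :
      Typing S ((x, T₁) :: Γ) t T₂ S' →
      Typing S Γ (.abs x T₁ t) (.arrow T₁ T₂) S
  | app {S S₁ S₂ Γ t₁ t₂ T₁ T₂} :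
      Typing S Γ t₁ (.arrow T₁ T₂) S₁ →
      Typing S₁ Γ t₂ T₁ S₂ →
      Typing S Γ (.app t₁ t₂) T₂ S₂
  | nil {S Γ T} : Typing S Γ .nil (.list T) S
  | cons {S S₁ S₂ Γ t₁ t₂ T} :
      Typing S Γ t₁ T S₁ →
      Typing S₁ Γ t₂ (.list T) S₂ →
      Typing S Γ (.cons t₁ t₂) (.list T) S₂
  | head {S S' Γ t T} :
      Typing S Γ t (.list T) S' →
      Typing S Γ (.head t) T S'
  | tail {S S' Γ t T} :
      Typing S Γ t (.list T) S' →
      Typing S Γ (.tail t) (.list T) S'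
  | record {S Γ} {fs : List (String × Tm)} {Ts : List (String × Ty)} :
      fs.length = Ts.length →
      fs.map Prod.fst = Ts.map Prod.fst →
      (∀ i : ℕ, ∀ h₁ : i < fs.length, ∀ h₂ : i < Ts.length,
        Typing S Γ (fs.get ⟨i, h₁⟩).2 (Ts.get ⟨i, h₂⟩).2 S) →
      Typing S Γ (.record fs) (.record Ts) S
  | proj {S S' Γ t Ts l T} :
      Typing S Γ t (.record Ts) S' →
      List.lookup l Ts = some T →
      Typing S Γ (.proj t l) T S'
  | tt {S Γ} : Typing S Γ .tt .bool S
  | ff {S Γ} : Typing S Γ .ff .bool S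
  | ite {S S₁ S₂ Γ c t₁ t₂ T} :
      Typing S Γ c .bool S₁ →
      Typing S₁ Γ t₁ T S₂ →
      Typing S₁ Γ t₂ T S₂ →
      Typing S Γ (.ite c t₁ t₂) T S₂
  | letIn {S S₁ S₂ Γ x t₁ T₁ t₂ T₂} :
      Typing S Γ t₁ T₁ S₁ →
      Typing S₁ ((x, T₁) :: Γ) t₂ T₂ S₂ →
      Typing S Γ (.letIn x t₁ t₂) T₂ S₂

mutual
/-- Substitution `[x ↦ s] t` of `s` for the free variable `x` in `t`. -/
def subst (x : String) (s : Tm) : Tm → Tm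
  | .var y => if y = x then s else .var y
  | .node v => .node v
  | .abs y T t => .abs y T (if y = x then t else subst x s t)
  | .app t₁ t₂ => .app (subst x s t₁) (subst x s t₂)
  | .nil => .nil
  | .cons t₁ t₂ => .cons (subst x s t₁) (subst x s t₂)
  | .head t => .head (subst x s t)
  | .tail t => .tail (subst x s t)
  | .record fs => .record (substFields x s fs)
  | .proj t l => .proj (subst x s t) l
  | .tt => .tt
  | .ff => .ff
  | .ite c t₁ t₂ => .ite (subst x s c) (subst x s t₁) (subst x s t₂)
  | .letIn y t₁ t₂ =>
      .letIn y (subst x s t₁) (if y = x then t₂ else subst x s t₂)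

/-- Substitution on record fields. -/
def substFields (x : String) (s : Tm) : List (String × Tm) → List (String × Tm)
  | [] => []
  | (l, t) :: fs => (l, subst x s t) :: substFields x s fs
end

mutual
/-- The free variables of a term. -/
def freeVars : Tm → List String
  | .var y => [y]
  | .node _ => []
  | .abs y _ t => (freeVars t).filter (· ≠ y)
  | .app t₁ t₂ => freeVars t₁ ++ freeVars t₂
  | .nil => []
  | .cons t₁ t₂ => freeVars t₁ ++ freeVars t₂
  | .head t => freeVars t
  | .tail t => freeVars t
  | .record fs => freeVarsFields fs
  | .proj t _ => freeVars t
  | .tt => []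
  | .ff => []
  | .ite c t₁ t₂ => freeVars c ++ freeVars t₁ ++ freeVars t₂
  | .letIn y t₁ t₂ => freeVars t₁ ++ (freeVars t₂).filter (· ≠ y)

/-- The free variables of record fields. -/
def freeVarsFields : List (String × Tm) → List String
  | [] => []
  | (_, t) :: fs => freeVars t ++ freeVarsFields fs
end

/-- A term is closed if it has no free variables. -/
def Closed (t : Tm) : Prop := freeVars t = []

/-- The small-step, call-by-value evaluation relation `t → t'`. -/
inductive Step : Tm → Tm → Prop where
  | beta {x T t v} : Value v → Step (.app (.abs x T t) v) (subst x v t)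
  | app₁ {t₁ t₁' t₂} : Step t₁ t₁' → Step (.app t₁ t₂) (.app t₁' t₂)
  | app₂ {v t₂ t₂'} : Value v → Step t₂ t₂' → Step (.app v t₂) (.app v t₂')
  | cons₁ {t₁ t₁' t₂} : Step t₁ t₁' → Step (.cons t₁ t₂) (.cons t₁' t₂)
  | cons₂ {v t₂ t₂'} : Value v → Step t₂ t₂' → Step (.cons v t₂) (.cons v t₂')
  | headCons {v₁ v₂} : Value v₁ → Value v₂ → Step (.head (.cons v₁ v₂)) v₁
  | headCong {t t'} : Step t t' → Step (.head t) (.head t')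
  | tailCons {v₁ v₂} : Value v₁ → Value v₂ → Step (.tail (.cons v₁ v₂)) v₂
  | tailCong {t t'} : Step t t' → Step (.tail t) (.tail t')
  | recordCong {vs : List (String × Tm)} {l t t' ts} :
      (∀ p ∈ vs, Value p.2) → Step t t' →
      Step (.record (vs ++ (l, t) :: ts)) (.record (vs ++ (l, t') :: ts))
  | projRecord {fs : List (String × Tm)} {l v} :
      (∀ p ∈ fs, Value p.2) → List.lookup l fs = some v →
      Step (.proj (.record fs) l) v
  | projCong {t t' l} : Step t t' → Step (.proj t l) (.proj t' l)
  | iteTrue {t₁ t₂} : Step (.ite .tt t₁ t₂) t₁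
  | iteFalse {t₁ t₂} : Step (.ite .ff t₁ t₂) t₂
  | iteCong {c c' t₁ t₂} : Step c c' → Step (.ite c t₁ t₂) (.ite c' t₁ t₂)
  | letV {x v t₂} : Value v → Step (.letIn x v t₂) (subst x v t₂)
  | letCong {x t₁ t₁' t₂} : Step t₁ t₁' → Step (.letIn x t₁ t₂) (.letIn x t₁' t₂)

/-- `t` is an immediate subterm of `t'`. -/
inductive DirectSub : Tm → Tm → Prop where
  | absBody {x T t} : DirectSub t (.abs x T t)
  | appFn {t₁ t₂} : DirectSub t₁ (.app t₁ t₂)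
  | appArg {t₁ t₂} : DirectSub t₂ (.app t₁ t₂)
  | consHd {t₁ t₂} : DirectSub t₁ (.cons t₁ t₂)
  | consTl {t₁ t₂} : DirectSub t₂ (.cons t₁ t₂)
  | headArg {t} : DirectSub t (.head t)
  | tailArg {t} : DirectSub t (.tail t)
  | recordField {fs : List (String × Tm)} {l t} :
      (l, t) ∈ fs → DirectSub t (.record fs)
  | projArg {t l} : DirectSub t (.proj t l)
  | iteCond {c t₁ t₂} : DirectSub c (.ite c t₁ t₂)
  | iteThen {c t₁ t₂} : DirectSub t₁ (.ite c t₁ t₂)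
  | iteElse {c t₁ t₂} : DirectSub t₂ (.ite c t₁ t₂)
  | letBound {x t₁ t₂} : DirectSub t₁ (.letIn x t₁ t₂)
  | letBody {x t₁ t₂} : DirectSub t₂ (.letIn x t₁ t₂)

/-- `t` is a (reflexive-transitive) subterm of `t'`. -/
def Subterm : Tm → Tm → Prop := Relation.ReflTransGen DirectSub

/-- `t` contains one of the stuck forms `head nil` or `tail nil`. -/
def ContainsStuck (t : Tm) : Prop :=
  Subterm (.head .nil) t ∨ Subterm (.tail .nil) t

theorem lookup_cons_self {α : Type*} {x : String} {U : α} {Γ : List (String × α)} :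
    List.lookup x ((x, U) :: Γ) = some U := by simp [List.lookup]

theorem lookup_cons_ne {α : Type*} {z x : String} (h : z ≠ x) {U : α} {Γ : List (String × α)} :
    List.lookup z ((x, U) :: Γ) = List.lookup z Γ := by
  simp [List.lookup, beq_eq_false_iff_ne.2 h]
/-- The shape state is only threaded: typing holds for any state. -/
theorem stateIrrel {S S' : ShapeState} {Γ t T} (h : Typing S Γ t T S') :
    ∀ S₀ : ShapeState, Typing S₀ Γ t T S₀ := by
  induction h with
  | var h => exact fun S₀ => .var h
  | node v => exact fun S₀ => .node v
  | abs _ ih => exact fun S₀ => .abs (ih S₀)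
  | app _ _ ih₁ ih₂ => exact fun S₀ => .app (ih₁ S₀) (ih₂ S₀)
  | nil => exact fun S₀ => .nil
  | cons _ _ ih₁ ih₂ => exact fun S₀ => .cons (ih₁ S₀) (ih₂ S₀)
  | head _ ih => exact fun S₀ => .head (ih S₀)
  | tail _ ih => exact fun S₀ => .tail (ih S₀)
  | record hlen hfst _ ih =>
      exact fun S₀ => .record hlen hfst (fun i h₁ h₂ => ih i h₁ h₂ S₀)
  | proj _ hl ih => exact fun S₀ => .proj (ih S₀) hl
  | tt => exact fun S₀ => .tt
  | ff => exact fun S₀ => .ff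
  | ite _ _ _ ihc ih₁ ih₂ => exact fun S₀ => .ite (ihc S₀) (ih₁ S₀) (ih₂ S₀)
  | letIn _ _ ih₁ ih₂ => exact fun S₀ => .letIn (ih₁ S₀) (ih₂ S₀)

/-- Context monotonicity (weakening): typing transfers to any context whose
    lookups extend the original ones. -/
theorem ctx_mono {S S' : ShapeState} {Γ t T} (h : Typing S Γ t T S') :
    ∀ Γ' : Ctx, (∀ z U, List.lookup z Γ = some U → List.lookup z Γ' = some U) →
    Typing S Γ' t T S' := by
  induction h with
  | var h => exact fun Γ' hg => .var (hg _ _ h)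
  | node v => exact fun Γ' _ => .node v
  | @abs S S' Γ x T₁ t T₂ _ ih =>
      refine fun Γ' hg => .abs (ih ((x, T₁) :: Γ') ?_)
      intro z U hz
      by_cases hzx : z = x
      · subst hzx; rw [lookup_cons_self] at hz ⊢; exact hz
      · rw [lookup_cons_ne hzx] at hz ⊢; exact hg _ _ hz
  | app _ _ ih₁ ih₂ => exact fun Γ' hg => .app (ih₁ Γ' hg) (ih₂ Γ' hg)
  | nil => exact fun Γ' _ => .nil
  | cons _ _ ih₁ ih₂ => exact fun Γ' hg => .cons (ih₁ Γ' hg) (ih₂ Γ' hg)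
  | head _ ih => exact fun Γ' hg => .head (ih Γ' hg)
  | tail _ ih => exact fun Γ' hg => .tail (ih Γ' hg)
  | record hlen hfst _ ih =>
      exact fun Γ' hg => .record hlen hfst (fun i h₁ h₂ => ih i h₁ h₂ Γ' hg)
  | proj _ hl ih => exact fun Γ' hg => .proj (ih Γ' hg) hl
  | tt => exact fun Γ' _ => .tt
  | ff => exact fun Γ' _ => .ff
  | ite _ _ _ ihc ih₁ ih₂ => exact fun Γ' hg => .ite (ihc Γ' hg) (ih₁ Γ' hg) (ih₂ Γ' hg)
  | @letIn S S₁ S₂ Γ x t₁ T₁ t₂ T₂ _ _ ih₁ ih₂ =>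
      refine fun Γ' hg => .letIn (ih₁ Γ' hg) (ih₂ ((x, T₁) :: Γ') ?_)
      intro z U hz
      by_cases hzx : z = x
      · subst hzx; rw [lookup_cons_self] at hz ⊢; exact hz
      · rw [lookup_cons_ne hzx] at hz ⊢; exact hg _ _ hz
theorem mem_freeVarsFields {fs : List (String × Tm)} {p : String × Tm} (hp : p ∈ fs)
    {z : String} (hz : z ∈ freeVars p.2) : z ∈ freeVarsFields fs := by
  induction fs with
  | nil => cases hp
  | cons q fs ih =>
      obtain ⟨l, t⟩ := q
      rw [show freeVarsFields ((l, t) :: fs) = freeVars t ++ freeVarsFields fs from rfl,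
        List.mem_append]
      rcases List.mem_cons.1 hp with rfl | hp
      · exact Or.inl hz
      · exact Or.inr (ih hp)

/-- Typing only depends on the context's lookups at free variables. -/
theorem free_ctx {S S' : ShapeState} {Γ t T} (h : Typing S Γ t T S') :
    ∀ Γ' : Ctx, (∀ z ∈ freeVars t, List.lookup z Γ = List.lookup z Γ') →
    Typing S Γ' t T S' := by
  induction h with
  | @var S Γ x T h =>
      refine fun Γ' hg => .var ?_
      rw [← hg x (by simp [freeVars])]; exact h
  | node v => exact fun Γ' _ => .node v
  | @abs S S' Γ x T₁ t T₂ _ ih =>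
      refine fun Γ' hg => .abs (ih ((x, T₁) :: Γ') ?_)
      intro z hz
      by_cases hzx : z = x
      · subst hzx; rw [lookup_cons_self, lookup_cons_self]
      · rw [lookup_cons_ne hzx, lookup_cons_ne hzx]
        exact hg z (by simp [freeVars, List.mem_filter, hz, hzx])
  | app _ _ ih₁ ih₂ =>
      exact fun Γ' hg => .app
        (ih₁ Γ' fun z hz => hg z (by simp [freeVars, hz]))
        (ih₂ Γ' fun z hz => hg z (by simp [freeVars, hz]))
  | nil => exact fun Γ' _ => .nil
  | cons _ _ ih₁ ih₂ =>
      exact fun Γ' hg => .cons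
        (ih₁ Γ' fun z hz => hg z (by simp [freeVars, hz]))
        (ih₂ Γ' fun z hz => hg z (by simp [freeVars, hz]))
  | head _ ih => exact fun Γ' hg => .head (ih Γ' fun z hz => hg z (by simpa [freeVars] using hz))
  | tail _ ih => exact fun Γ' hg => .tail (ih Γ' fun z hz => hg z (by simpa [freeVars] using hz))
  | @record S Γ fs Ts hlen hfst _ ih =>
      refine fun Γ' hg => .record hlen hfst (fun i h₁ h₂ => ih i h₁ h₂ Γ' ?_)
      intro z hz
      exact hg z (by
        show z ∈ freeVars (Tm.record fs)
        rw [show freeVars (Tm.record fs) = freeVarsFields fs from rfl]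
        exact mem_freeVarsFields (fs.get_mem _) hz)
  | proj _ hl ih =>
      exact fun Γ' hg => .proj (ih Γ' fun z hz => hg z (by simpa [freeVars] using hz)) hl
  | tt => exact fun Γ' _ => .tt
  | ff => exact fun Γ' _ => .ff
  | ite _ _ _ ihc ih₁ ih₂ =>
      exact fun Γ' hg => .ite
        (ihc Γ' fun z hz => hg z (by simp [freeVars, hz]))
        (ih₁ Γ' fun z hz => hg z (by simp [freeVars, hz]))
        (ih₂ Γ' fun z hz => hg z (by simp [freeVars, hz]))
  | @letIn S S₁ S₂ Γ x t₁ T₁ t₂ T₂ _ _ ih₁ ih₂ =>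
      refine fun Γ' hg => .letIn
        (ih₁ Γ' fun z hz => hg z (by simp [freeVars, hz])) (ih₂ ((x, T₁) :: Γ') ?_)
      intro z hz
      by_cases hzx : z = x
      · subst hzx; rw [lookup_cons_self, lookup_cons_self]
      · rw [lookup_cons_ne hzx, lookup_cons_ne hzx]
        exact hg z (by simp [freeVars, List.mem_filter, hz, hzx])
theorem substFields_eq_map (x : String) (s : Tm) (fs : List (String × Tm)) :
    substFields x s fs = fs.map (fun p => (p.1, subst x s p.2)) := by
  induction fs with
  | nil => rfl
  | cons q fs ih => obtain ⟨l, t⟩ := q; rw [substFields, ih]; rfl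

/-- Substitution lemma. -/
theorem subst_typing {x : String} {v : Tm} {T₁ : Ty}
    (hv : Typing [] [] v T₁ []) {S S' : ShapeState} {Γ' : Ctx} {t T}
    (ht : Typing S Γ' t T S') :
    ∀ Γ : Ctx, (∀ z, z ≠ x → List.lookup z Γ' = List.lookup z Γ) →
    List.lookup x Γ' = some T₁ → Typing ([] : ShapeState) Γ (subst x v t) T [] := by
  induction ht with
  | @var S Γ' y T h =>
      intro Γ hg hx
      by_cases hyx : y = x
      · rw [hyx] at h
        rw [h] at hx; cases hx
        rw [show subst x v (.var y) = v by simp [subst, hyx]]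
        exact ctx_mono hv Γ (by simp)
      · rw [show subst x v (.var y) = .var y by simp [subst, hyx]]
        exact .var (by rw [← hg y hyx]; exact h)
  | node w => exact fun Γ _ _ => by rw [show subst x v (.node w) = .node w from rfl]; exact .node w
  | @abs S S' Γ' y T₂ t Tb _ ih =>
      intro Γ hg hx
      rw [show subst x v (.abs y T₂ t) = .abs y T₂ (if y = x then t else subst x v t) from rfl]
      by_cases hyx : y = x
      · subst hyx
        rw [if_pos rfl]
        refine .abs (stateIrrel (free_ctx ‹Typing S ((y, T₂) :: Γ') t Tb S'› ((y, T₂) :: Γ) ?_) _)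
        intro z _
        by_cases hzy : z = y
        · subst hzy; rw [lookup_cons_self, lookup_cons_self]
        · rw [lookup_cons_ne hzy, lookup_cons_ne hzy]; exact hg z hzy
      · rw [if_neg hyx]
        refine .abs (ih ((y, T₂) :: Γ) ?_ ?_)
        · intro z hzx
          by_cases hzy : z = y
          · subst hzy; rw [lookup_cons_self, lookup_cons_self]
          · rw [lookup_cons_ne hzy, lookup_cons_ne hzy]; exact hg z hzx
        · rw [lookup_cons_ne (fun h => hyx h.symm)]; exact hx
  | app _ _ ih₁ ih₂ =>
      intro Γ hg hx
      exact .app (S₁ := []) (ih₁ Γ hg hx) (ih₂ Γ hg hx)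
  | nil => exact fun Γ _ _ => .nil
  | cons _ _ ih₁ ih₂ =>
      intro Γ hg hx
      exact .cons (S₁ := []) (ih₁ Γ hg hx) (ih₂ Γ hg hx)
  | head _ ih => exact fun Γ hg hx => .head (ih Γ hg hx)
  | tail _ ih => exact fun Γ hg hx => .tail (ih Γ hg hx)
  | @record S Γ' fs Ts hlen hfst _ ih =>
      intro Γ hg hx
      rw [show subst x v (.record fs) = .record (substFields x v fs) from rfl,
        substFields_eq_map]
      refine .record (by simpa using hlen) (by simpa [Function.comp_def] using hfst) ?_
      intro i h₁ h₂
      have h₁' : i < fs.length := by simpa using h₁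
      have := ih i h₁' h₂ Γ hg hx
      simpa using this
  | proj _ hl ih =>
      intro Γ hg hx
      exact .proj (ih Γ hg hx) hl
  | tt => exact fun Γ _ _ => .tt
  | ff => exact fun Γ _ _ => .ff
  | ite _ _ _ ihc ih₁ ih₂ =>
      intro Γ hg hx
      exact .ite (S₁ := []) (ihc Γ hg hx) (ih₁ Γ hg hx) (ih₂ Γ hg hx)
  | @letIn S S₁ S₂ Γ' y t₁ T₂ t₂ Tb ht₁ ht₂ ih₁ ih₂ =>
      intro Γ hg hx
      rw [show subst x v (.letIn y t₁ t₂)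
        = .letIn y (subst x v t₁) (if y = x then t₂ else subst x v t₂) from rfl]
      by_cases hyx : y = x
      · subst hyx
        rw [if_pos rfl]
        refine .letIn (S₁ := []) (ih₁ Γ hg hx)
          (stateIrrel (free_ctx ht₂ ((y, T₂) :: Γ) ?_) _)
        intro z _
        by_cases hzy : z = y
        · subst hzy; rw [lookup_cons_self, lookup_cons_self]
        · rw [lookup_cons_ne hzy, lookup_cons_ne hzy]; exact hg z hzy
      · rw [if_neg hyx]
        refine .letIn (S₁ := []) (ih₁ Γ hg hx) (ih₂ ((y, T₂) :: Γ) ?_ ?_)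
        · intro z hzx
          by_cases hzy : z = y
          · subst hzy; rw [lookup_cons_self, lookup_cons_self]
          · rw [lookup_cons_ne hzy, lookup_cons_ne hzy]; exact hg z hzx
        · rw [lookup_cons_ne (fun h => hyx h.symm)]; exact hx
theorem canon_arrow {S S' Γ v A B} (hv : Value v) (h : Typing S Γ v (.arrow A B) S') :
    ∃ x t, v = .abs x A t := by
  cases hv <;> cases h
  exact ⟨_, _, rfl⟩

theorem canon_list {S S' Γ v A} (hv : Value v) (h : Typing S Γ v (.list A) S') :
    v = .nil ∨ ∃ v₁ v₂, v = .cons v₁ v₂ ∧ Value v₁ ∧ Value v₂ := by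
  cases hv <;> cases h
  · exact Or.inl rfl
  · exact Or.inr ⟨_, _, rfl, ‹_›, ‹_›⟩

theorem canon_bool {S S' Γ v} (hv : Value v) (h : Typing S Γ v .bool S') :
    v = .tt ∨ v = .ff := by
  cases hv <;> cases h
  · exact Or.inl rfl
  · exact Or.inr rfl

theorem canon_record {S S' Γ v Ts} (hv : Value v) (h : Typing S Γ v (.record Ts) S') :
    ∃ fs : List (String × Tm), v = .record fs ∧ (∀ p ∈ fs, Value p.2) ∧
      fs.map Prod.fst = Ts.map Prod.fst ∧
      ∀ i (h₁ : i < fs.length) (h₂ : i < Ts.length),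
        Typing S Γ (fs.get ⟨i, h₁⟩).2 (Ts.get ⟨i, h₂⟩).2 S := by
  cases hv <;> cases h
  exact ⟨_, rfl, ‹_›, ‹_›, ‹_›⟩

theorem record_lookup_typing {S Γ l} :
    ∀ (fs : List (String × Tm)) (Ts : List (String × Ty)),
    fs.map Prod.fst = Ts.map Prod.fst →
    (∀ i (h₁ : i < fs.length) (h₂ : i < Ts.length),
        Typing S Γ (fs.get ⟨i, h₁⟩).2 (Ts.get ⟨i, h₂⟩).2 S) →
    ∀ {v T}, List.lookup l fs = some v → List.lookup l Ts = some T →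
    Typing S Γ v T S := by
  intro fs
  induction fs with
  | nil => intro Ts _ _ v T hv; simp [List.lookup] at hv
  | cons p fs ih =>
      intro Ts hfst hty v T hv hT
      obtain ⟨l₁, t₁⟩ := p
      cases Ts with
      | nil => simp at hfst
      | cons q Ts =>
          obtain ⟨l₂, T₂⟩ := q
          simp only [List.map_cons, List.cons.injEq] at hfst
          obtain ⟨rfl, hfst⟩ := hfst
          by_cases hl : l = l₁
          · subst hl
            rw [lookup_cons_self] at hv hT
            cases hv; cases hT
            exact hty 0 (by simp) (by simp)
          · rw [lookup_cons_ne hl] at hv hT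
            exact ih Ts hfst (fun i h₁ h₂ => hty (i+1) (by simpa using h₁) (by simpa using h₂))
              hv hT

theorem lookup_isSome_of_fst_eq {l : String} :
    ∀ (fs : List (String × Tm)) (Ts : List (String × Ty)),
    fs.map Prod.fst = Ts.map Prod.fst →
    ∀ {T}, List.lookup l Ts = some T → ∃ v, List.lookup l fs = some v := by
  intro fs
  induction fs with
  | nil => intro Ts hfst T hT; cases Ts with
      | nil => simp [List.lookup] at hT
      | cons q Ts => simp at hfst
  | cons p fs ih =>
      intro Ts hfst T hT
      obtain ⟨l₁, t₁⟩ := p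
      cases Ts with
      | nil => simp at hfst
      | cons q Ts =>
          obtain ⟨l₂, T₂⟩ := q
          simp only [List.map_cons, List.cons.injEq] at hfst
          obtain ⟨rfl, hfst⟩ := hfst
          by_cases hl : l = l₁
          · subst hl; exact ⟨t₁, lookup_cons_self⟩
          · rw [lookup_cons_ne hl] at hT ⊢
            exact ih Ts hfst hT
theorem get_append_mid_ne {α : Type*} (vs : List α) (a b : α) (ts : List α) {i : ℕ}
    (h : i ≠ vs.length) (h₁ : i < (vs ++ a :: ts).length) (h₂ : i < (vs ++ b :: ts).length) :
    (vs ++ a :: ts).get ⟨i, h₁⟩ = (vs ++ b :: ts).get ⟨i, h₂⟩ := by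
  rw [List.get_eq_getElem, List.get_eq_getElem, List.getElem_append, List.getElem_append]
  by_cases hi : i < vs.length
  · simp [hi]
  · obtain ⟨k, hk⟩ : ∃ k, i - vs.length = k + 1 :=
      ⟨i - vs.length - 1, by omega⟩
    simp only [hi, dif_neg, not_false_iff, hk]
    simp

theorem get_append_mid {α : Type*} (vs : List α) (a : α) (ts : List α)
    (h : vs.length < (vs ++ a :: ts).length) :
    (vs ++ a :: ts).get ⟨vs.length, h⟩ = a := by
  rw [List.get_eq_getElem, List.getElem_append_right (le_refl _)]
  simp

/-- Preservation. -/
theorem preservation {t t' : Tm} {T : Ty}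
    (h : Typing [] [] t T []) (hs : Step t t') : Typing ([] : ShapeState) [] t' T [] := by
  induction hs generalizing T with
  | @beta x T₀ tb v hv =>
      cases h with
      | app h₁ h₂ =>
          cases h₁ with
          | abs hb =>
              refine subst_typing (stateIrrel h₂ []) (stateIrrel hb []) [] ?_ ?_
              · intro z hzx
                rw [lookup_cons_ne hzx]
              · exact lookup_cons_self
  | app₁ _ ih =>
      cases h with
      | app h₁ h₂ => exact .app (S₁ := []) (ih (stateIrrel h₁ [])) (stateIrrel h₂ [])
  | app₂ hv _ ih =>
      cases h with
      | app h₁ h₂ => exact .app (S₁ := []) (stateIrrel h₁ []) (ih (stateIrrel h₂ []))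
  | cons₁ _ ih =>
      cases h with
      | cons h₁ h₂ => exact .cons (S₁ := []) (ih (stateIrrel h₁ [])) (stateIrrel h₂ [])
  | cons₂ hv _ ih =>
      cases h with
      | cons h₁ h₂ => exact .cons (S₁ := []) (stateIrrel h₁ []) (ih (stateIrrel h₂ []))
  | headCons hv₁ hv₂ =>
      cases h with
      | head h₁ => cases h₁ with
        | cons h₂ h₃ => exact stateIrrel h₂ []
  | headCong _ ih =>
      cases h with
      | head h₁ => exact .head (ih (stateIrrel h₁ []))
  | tailCons hv₁ hv₂ =>
      cases h with
      | tail h₁ => cases h₁ with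
        | cons h₂ h₃ => exact stateIrrel h₃ []
  | tailCong _ ih =>
      cases h with
      | tail h₁ => exact .tail (ih (stateIrrel h₁ []))
  | @recordCong vs l t t' ts hvals hstep ih =>
      cases h with
      | @record _ _ _ Ts hlen hfst hty =>
          refine .record (by simpa using hlen) (by simpa using hfst) ?_
          intro i h₁ h₂
          have h₁' : i < (vs ++ (l, t) :: ts).length := by simpa using h₁
          by_cases hi : i = vs.length
          · subst hi
            have e : (vs ++ (l, t') :: ts).get ⟨vs.length, h₁⟩ = (l, t') :=
              get_append_mid vs (l, t') ts h₁
            have e' : (vs ++ (l, t) :: ts).get ⟨vs.length, h₁'⟩ = (l, t) :=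
              get_append_mid vs (l, t) ts h₁'
            rw [e]
            have := hty vs.length h₁' h₂
            rw [e'] at this
            exact ih this
          · rw [get_append_mid_ne vs (l, t') (l, t) ts hi h₁ h₁']
            exact hty i h₁' h₂
  | @projRecord fs l v hvals hlook =>
      cases h with
      | proj h₁ hl =>
          cases h₁ with
          | record hlen hfst hty =>
              exact record_lookup_typing fs _ hfst hty hlook hl
  | projCong _ ih =>
      cases h with
      | proj h₁ hl => exact .proj (ih (stateIrrel h₁ [])) hl
  | iteTrue =>
      cases h with
      | ite hc h₁ h₂ => exact stateIrrel h₁ []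
  | iteFalse =>
      cases h with
      | ite hc h₁ h₂ => exact stateIrrel h₂ []
  | iteCong _ ih =>
      cases h with
      | ite hc h₁ h₂ =>
          exact .ite (S₁ := []) (ih (stateIrrel hc [])) (stateIrrel h₁ []) (stateIrrel h₂ [])
  | @letV x v tb hv =>
      cases h with
      | letIn h₁ h₂ =>
          refine subst_typing (stateIrrel h₁ []) (stateIrrel h₂ []) [] ?_ ?_
          · intro z hzx
            rw [lookup_cons_ne hzx]
          · exact lookup_cons_self
  | letCong _ ih =>
      cases h with
      | letIn h₁ h₂ => exact .letIn (S₁ := []) (ih (stateIrrel h₁ [])) (stateIrrel h₂ [])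
theorem containsStuck_lift {u w : Tm} (h : ContainsStuck u) (hd : DirectSub u w) :
    ContainsStuck w :=
  h.imp (fun h' => Relation.ReflTransGen.tail h' hd) (fun h' => Relation.ReflTransGen.tail h' hd)

theorem record_split :
    ∀ fs : List (String × Tm),
    (∀ p ∈ fs, Value p.2 ∨ ContainsStuck p.2 ∨ ∃ t', Step p.2 t') →
    (∀ p ∈ fs, Value p.2) ∨ (∃ p ∈ fs, ContainsStuck p.2) ∨
    (∃ (vs : List (String × Tm)) (l : String) (t t' : Tm) (ts : List (String × Tm)),
      fs = vs ++ (l, t) :: ts ∧ (∀ p ∈ vs, Value p.2) ∧ Step t t') := by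
  intro fs
  induction fs with
  | nil => intro _; left; simp
  | cons p fs ih =>
      intro h
      obtain ⟨l, t⟩ := p
      rcases h (l, t) (by simp) with hv | hstk | ⟨t', hst⟩
      · rcases ih (fun q hq => h q (List.mem_cons_of_mem _ hq)) with hall | ⟨q, hq, hqs⟩ | 
          ⟨vs, l', u, u', ts, rfl, hvs, hstep⟩
        · left
          intro q hq
          rcases List.mem_cons.1 hq with rfl | hq
          · exact hv
          · exact hall q hq
        · exact Or.inr (Or.inl ⟨q, List.mem_cons_of_mem _ hq, hqs⟩)
        · refine Or.inr (Or.inr ⟨(l, t) :: vs, l', u, u', ts, rfl, ?_, hstep⟩)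
          intro q hq
          rcases List.mem_cons.1 hq with rfl | hq
          · exact hv
          · exact hvs q hq
      · exact Or.inr (Or.inl ⟨(l, t), by simp, hstk⟩)
      · exact Or.inr (Or.inr ⟨[], l, t, t', fs, by simp, by simp, hst⟩)

/-- Progress. -/
theorem progress {S S' : ShapeState} {Γ : Ctx} {t : Tm} {T : Ty}
    (h : Typing S Γ t T S') : Γ = [] →
    Value t ∨ ContainsStuck t ∨ ∃ t', Step t t' := by
  induction h with
  | @var S Γ x T h =>
      rintro rfl
      simp [List.lookup] at h
  | node v => exact fun _ => Or.inl (.node v)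
  | abs _ _ => exact fun _ => Or.inl (.abs _ _ _)
  | @app S S₁ S₂ Γ t₁ t₂ T₁ T₂ h₁ h₂ ih₁ ih₂ =>
      rintro rfl
      rcases ih₁ rfl with hv₁ | hstk | ⟨t₁', hst⟩
      · rcases ih₂ rfl with hv₂ | hstk | ⟨t₂', hst⟩
        · obtain ⟨x, tb, rfl⟩ := canon_arrow hv₁ h₁
          exact Or.inr (Or.inr ⟨_, .beta hv₂⟩)
        · exact Or.inr (Or.inl (containsStuck_lift hstk .appArg))
        · exact Or.inr (Or.inr ⟨_, .app₂ hv₁ hst⟩)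
      · exact Or.inr (Or.inl (containsStuck_lift hstk .appFn))
      · exact Or.inr (Or.inr ⟨_, .app₁ hst⟩)
  | nil => exact fun _ => Or.inl .nil
  | cons h₁ h₂ ih₁ ih₂ =>
      rintro rfl
      rcases ih₁ rfl with hv₁ | hstk | ⟨t₁', hst⟩
      · rcases ih₂ rfl with hv₂ | hstk | ⟨t₂', hst⟩
        · exact Or.inl (.cons hv₁ hv₂)
        · exact Or.inr (Or.inl (containsStuck_lift hstk .consTl))
        · exact Or.inr (Or.inr ⟨_, .cons₂ hv₁ hst⟩)
      · exact Or.inr (Or.inl (containsStuck_lift hstk .consHd))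
      · exact Or.inr (Or.inr ⟨_, .cons₁ hst⟩)
  | head h ih =>
      rintro rfl
      rcases ih rfl with hv | hstk | ⟨t', hst⟩
      · rcases canon_list hv h with rfl | ⟨v₁, v₂, rfl, hv₁, hv₂⟩
        · exact Or.inr (Or.inl (Or.inl Relation.ReflTransGen.refl))
        · exact Or.inr (Or.inr ⟨_, .headCons hv₁ hv₂⟩)
      · exact Or.inr (Or.inl (containsStuck_lift hstk .headArg))
      · exact Or.inr (Or.inr ⟨_, .headCong hst⟩)
  | tail h ih =>
      rintro rfl
      rcases ih rfl with hv | hstk | ⟨t', hst⟩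
      · rcases canon_list hv h with rfl | ⟨v₁, v₂, rfl, hv₁, hv₂⟩
        · exact Or.inr (Or.inl (Or.inr Relation.ReflTransGen.refl))
        · exact Or.inr (Or.inr ⟨_, .tailCons hv₁ hv₂⟩)
      · exact Or.inr (Or.inl (containsStuck_lift hstk .tailArg))
      · exact Or.inr (Or.inr ⟨_, .tailCong hst⟩)
  | @record S Γ fs Ts hlen hfst hty ih =>
      rintro rfl
      have hall : ∀ p ∈ fs, Value p.2 ∨ ContainsStuck p.2 ∨ ∃ t', Step p.2 t' := by
        intro p hp
        obtain ⟨i, hi, rfl⟩ := List.mem_iff_get.1 hp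
        exact ih i.1 i.2 (by omega) rfl
      rcases record_split fs hall with hvals | ⟨p, hp, hps⟩ |
        ⟨vs, l, u, u', ts, rfl, hvs, hstep⟩
      · exact Or.inl (.record hvals)
      · exact Or.inr (Or.inl (containsStuck_lift hps (.recordField (l := p.1) (by simpa using hp))))
      · exact Or.inr (Or.inr ⟨_, .recordCong hvs hstep⟩)
  | @proj S S' Γ t Ts l T h hl ih =>
      rintro rfl
      rcases ih rfl with hv | hstk | ⟨t', hst⟩
      · obtain ⟨fs, rfl, hvals, hfst, _⟩ := canon_record hv h
        obtain ⟨v, hv'⟩ := lookup_isSome_of_fst_eq fs Ts hfst hl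
        exact Or.inr (Or.inr ⟨v, .projRecord hvals hv'⟩)
      · exact Or.inr (Or.inl (containsStuck_lift hstk .projArg))
      · exact Or.inr (Or.inr ⟨_, .projCong hst⟩)
  | tt => exact fun _ => Or.inl .tt
  | ff => exact fun _ => Or.inl .ff
  | ite hc h₁ h₂ ihc ih₁ ih₂ =>
      rintro rfl
      rcases ihc rfl with hv | hstk | ⟨c', hst⟩
      · rcases canon_bool hv hc with rfl | rfl
        · exact Or.inr (Or.inr ⟨_, .iteTrue⟩)
        · exact Or.inr (Or.inr ⟨_, .iteFalse⟩)
      · exact Or.inr (Or.inl (containsStuck_lift hstk .iteCond))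
      · exact Or.inr (Or.inr ⟨_, .iteCong hst⟩)
  | letIn h₁ h₂ ih₁ ih₂ =>
      rintro rfl
      rcases ih₁ rfl with hv | hstk | ⟨t₁', hst⟩
      · exact Or.inr (Or.inr ⟨_, .letV hv⟩)
      · exact Or.inr (Or.inl (containsStuck_lift hstk .letBound))
      · exact Or.inr (Or.inr ⟨_, .letCong hst⟩)

/-- Type soundness: a well-typed, closed term does not get stuck during
    evaluation, except possibly at the forms `head nil` or `tail nil`. -/
theorem type_soundness {S S' : ShapeState} {Γ : Ctx} {t t' : Tm} {T : Ty}
    (hclosed : Closed t) (hty : Typing S Γ t T S')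
    (hsteps : Relation.ReflTransGen Step t t') :
    Value t' ∨ ContainsStuck t' ∨ ∃ t'', Step t' t'' := by
  have h0 : Typing ([] : ShapeState) [] t T [] := by
    refine stateIrrel (free_ctx hty [] ?_) []
    intro z hz
    rw [hclosed] at hz
    cases hz
  have hinv : Typing ([] : ShapeState) [] t' T [] := by
    clear hclosed hty
    induction hsteps with
    | refl => exact h0
    | tail _ hstep ih => exact preservation ih hstep
  exact progress hinv rfl
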